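/- Let G be a strongly connected digraph with maximum outdegree Δ⁺ and let α ∈ [0,1). Then λ_α(G) > α·Δ⁺. -/

import Mathlib

open Matrix Finset ENNReal

/-- The outdegree of a vertex in a digraph given by its arc relation. -/
def outDeg {V : Type*} [Fintype V] (E : V → V → Prop) [DecidableRel E] (u : V) : ℕ :=
  (Finset.univ.filter (fun v => E u v)).card

/-- The maximum outdegree. -/
def maxOutDeg {V : Type*} [Fintype V] (E : V → V → Prop) [DecidableRel E] : ℕ :=
  Finset.univ.sup (outDeg E)

/-- A simple digraph has no loops. -/
def IsSimpleDigraph {V : Type*} (E : V → V → Prop) : Prop := ∀ v, ¬ E v v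

/-- Strong connectivity: every vertex reaches every other by a directed walk. -/
def StronglyConnected {V : Type*} (E : V → V → Prop) : Prop :=
  ∀ u v, Relation.ReflTransGen E u v

/-- The A_α matrix  α D + (1-α) A  of a digraph, over ℂ. -/
noncomputable def Aalpha {V : Type*} [Fintype V] [DecidableEq V] (α : ℝ)
    (E : V → V → Prop) [DecidableRel E] : Matrix V V ℂ :=
  (α : ℂ) • Matrix.diagonal (fun u => (outDeg E u : ℂ)) +
    ((1 - α : ℝ) : ℂ) • Matrix.of (fun u v => if E u v then (1 : ℂ) else 0)

/-- The A_α spectral radius of a digraph. -/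
noncomputable def lambdaAlpha {V : Type*} [Fintype V] [DecidableEq V] (α : ℝ)
    (E : V → V → Prop) [DecidableRel E] : ℝ≥0∞ :=
  spectralRadius ℂ (Aalpha α E)

/-- The signless Laplacian matrix D + A of a digraph, over ℂ. -/
noncomputable def signlessLaplacian {V : Type*} [Fintype V] [DecidableEq V]
    (E : V → V → Prop) [DecidableRel E] : Matrix V V ℂ :=
  Matrix.diagonal (fun u => (outDeg E u : ℂ)) +
    Matrix.of (fun u v => if E u v then (1 : ℂ) else 0)

/-- The signless Laplacian spectral radius of a digraph. -/
noncomputable def qSpec {V : Type*} [Fintype V] [DecidableEq V]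
    (E : V → V → Prop) [DecidableRel E] : ℝ≥0∞ :=
  spectralRadius ℂ (signlessLaplacian E)

section Aux

set_option linter.unusedSectionVars false

attribute [local instance] Matrix.linftyOpNormedRing Matrix.linftyOpNormedAlgebra

variable {V : Type*} [Fintype V] [DecidableEq V]

/-- Real version of the `Aalpha` matrix. -/
noncomputable def Ralpha (α : ℝ) (E : V → V → Prop) [DecidableRel E] : Matrix V V ℝ :=
  α • Matrix.diagonal (fun u => (outDeg E u : ℝ)) +
    (1 - α) • Matrix.of (fun u v => if E u v then (1 : ℝ) else 0)

lemma Ralpha_apply (α : ℝ) (E : V → V → Prop) [DecidableRel E] (i j : V) :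
    Ralpha α E i j = α * (if i = j then (outDeg E i : ℝ) else 0) +
      (1 - α) * (if E i j then 1 else 0) := by
  simp [Ralpha, Matrix.diagonal, Matrix.add_apply, Matrix.of_apply]

lemma Aalpha_eq_map (α : ℝ) (E : V → V → Prop) [DecidableRel E] :
    Aalpha α E = (algebraMap ℝ ℂ).mapMatrix (Ralpha α E) := by
  ext i j
  simp only [Aalpha, Ralpha, RingHom.mapMatrix_apply, Matrix.map_apply, Matrix.add_apply,
    Matrix.smul_apply, Matrix.diagonal, Matrix.of_apply]
  push_cast
  split_ifs <;> simp

lemma Ralpha_nonneg {α : ℝ} (hα0 : 0 ≤ α) (hα1 : α ≤ 1) (E : V → V → Prop) [DecidableRel E]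
    (i j : V) : 0 ≤ Ralpha α E i j := by
  rw [Ralpha_apply]
  have h1 : (0:ℝ) ≤ 1 - α := by linarith
  apply add_nonneg
  · apply mul_nonneg hα0; split_ifs <;> positivity
  · apply mul_nonneg h1; split_ifs <;> norm_num

lemma Ralpha_diag {α : ℝ} (E : V → V → Prop) [DecidableRel E] (hsimple : IsSimpleDigraph E)
    (u : V) : Ralpha α E u u = α * (outDeg E u : ℝ) := by
  rw [Ralpha_apply]
  simp [hsimple u]

lemma Ralpha_edge {α : ℝ} (E : V → V → Prop) [DecidableRel E] (hsimple : IsSimpleDigraph E)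
    {i j : V} (h : E i j) : Ralpha α E i j = 1 - α := by
  rw [Ralpha_apply]
  have hij : i ≠ j := fun hij => hsimple j (hij ▸ h)
  simp [hij, h]

lemma pow_entry_nonneg {M : Matrix V V ℝ} (hM : ∀ i j, 0 ≤ M i j) (k : ℕ) (i j : V) :
    0 ≤ (M ^ k) i j := by
  induction k generalizing i j with
  | zero => simp only [pow_zero, Matrix.one_apply]; split_ifs <;> norm_num
  | succ n ih =>
    rw [pow_succ, Matrix.mul_apply]
    exact Finset.sum_nonneg fun z _ => mul_nonneg (ih i z) (hM z j)

lemma mul_entry_le {M N : Matrix V V ℝ} (hM : ∀ i j, 0 ≤ M i j) (hN : ∀ i j, 0 ≤ N i j)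
    (x y z : V) : M x y * N y z ≤ (M * N) x z := by
  rw [Matrix.mul_apply]
  exact Finset.single_le_sum (f := fun k => M x k * N k z)
    (fun k _ => mul_nonneg (hM x k) (hN k z)) (Finset.mem_univ y)

lemma Aalpha_pow (α : ℝ) (E : V → V → Prop) [DecidableRel E] (n : ℕ) :
    (Aalpha α E) ^ n = (algebraMap ℝ ℂ).mapMatrix ((Ralpha α E) ^ n) := by
  rw [Aalpha_eq_map, ← map_pow]

end Aux

attribute [local instance] Matrix.linftyOpNormedRing Matrix.linftyOpNormedAlgebra

set_option maxHeartbeats 1000000 in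
theorem stmt_7 {V : Type*} [Fintype V] [DecidableEq V]
    (E : V → V → Prop) [DecidableRel E]
    (hsimple : IsSimpleDigraph E) (hsc : StronglyConnected E)
    (hcard : 1 < Fintype.card V)
    (α : ℝ) (hα0 : 0 ≤ α) (hα1 : α < 1) :
    ENNReal.ofReal (α * (maxOutDeg E : ℝ)) < lambdaAlpha α E := by
  classical
  have h1α : (0:ℝ) < 1 - α := by linarith
  have : Nonempty V := Fintype.card_pos_iff.mp (by omega)
  haveI : CompleteSpace (Matrix V V ℂ) := FiniteDimensional.complete ℂ _
  set R := Ralpha α E with hRdef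
  have hRnn : ∀ i j, 0 ≤ R i j := Ralpha_nonneg hα0 hα1.le E
  have hPnn : ∀ k i j, 0 ≤ (R ^ k) i j := fun k => pow_entry_nonneg hRnn k
  -- a vertex of maximal outdegree
  obtain ⟨u, -, hu⟩ := Finset.exists_mem_eq_sup (univ : Finset V) univ_nonempty (outDeg E)
  have hu' : (maxOutDeg E : ℝ) = (outDeg E u : ℝ) := by
    rw [maxOutDeg, hu]
  set d : ℝ := α * (maxOutDeg E : ℝ) with hd
  have hd0 : 0 ≤ d := by
    apply mul_nonneg hα0; positivity
  have hRuu : R u u = d := by rw [hRdef, Ralpha_diag E hsimple, hd, hu']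
  -- a first out-neighbor of u
  obtain ⟨v, hv⟩ := Fintype.exists_ne_of_one_lt_card hcard u
  obtain ⟨w, huw, -⟩ : ∃ w, E u w ∧ Relation.ReflTransGen E w v := by
    rcases (hsc u v).cases_head with h | h
    · exact absurd h.symm hv
    · exact h
  have hune : u ≠ w := fun h => hsimple u (h ▸ huw)
  -- walk bound from any vertex back to u
  have walk_bound : ∀ x, Relation.ReflTransGen E x u → ∃ ℓ : ℕ, (1-α)^ℓ ≤ (R ^ ℓ) x u := by
    intro x hx
    induction hx using Relation.ReflTransGen.head_induction_on with
    | refl => exact ⟨0, by simp⟩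
    | @head x y hxy _ ih =>
      obtain ⟨ℓ, hℓ⟩ := ih
      refine ⟨ℓ + 1, ?_⟩
      calc (1-α)^(ℓ+1) = (1-α) * (1-α)^ℓ := by ring
        _ ≤ R x y * (R ^ ℓ) y u := by
            apply mul_le_mul (le_of_eq (Ralpha_edge E hsimple hxy).symm) hℓ
              (pow_nonneg h1α.le ℓ) (hRnn _ _)
        _ ≤ (R * R ^ ℓ) x u := mul_entry_le hRnn (hPnn ℓ) _ _ _
        _ = (R ^ (ℓ + 1)) x u := by rw [pow_succ']
  obtain ⟨ℓ₀, hℓ₀⟩ := walk_bound w (hsc w u)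
  set ℓ : ℕ := ℓ₀ + 1 with hℓdef
  have hℓpos : (0:ℝ) < (ℓ:ℝ) := by positivity
  -- diagonal power bound
  have hdiagpow : ∀ k : ℕ, d ^ k ≤ (R ^ k) u u := by
    intro k
    induction k with
    | zero => simp
    | succ n ih =>
      rw [pow_succ, pow_succ]
      calc d ^ n * d ≤ (R ^ n) u u * R u u := by
            apply mul_le_mul ih (le_of_eq hRuu.symm) hd0 (hPnn n u u)
        _ ≤ (R ^ n * R) u u := mul_entry_le (hPnn n) hRnn _ _ _
  -- the key entry lower bound at length ℓ
  set s : ℝ := d ^ ℓ + (1-α) ^ ℓ with hs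
  have hs_pos : 0 < s := by
    have : (0:ℝ) < (1-α)^ℓ := pow_pos h1α ℓ
    nlinarith [pow_nonneg hd0 ℓ]
  have hkey : s ≤ (R ^ ℓ) u u := by
    have h2 : R u u * (R ^ ℓ₀) u u + R u w * (R ^ ℓ₀) w u ≤ (R * R ^ ℓ₀) u u := by
      rw [Matrix.mul_apply]
      have hsub := Finset.sum_le_sum_of_subset_of_nonneg
        (f := fun k => R u k * (R ^ ℓ₀) k u) (Finset.subset_univ ({u, w} : Finset V))
        (fun k _ _ => mul_nonneg (hRnn u k) (hPnn ℓ₀ k u))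
      rwa [Finset.sum_pair hune] at hsub
    have h3 : d ^ ℓ ≤ R u u * (R ^ ℓ₀) u u := by
      rw [hRuu, hℓdef, pow_succ']
      exact mul_le_mul_of_nonneg_left (hdiagpow ℓ₀) hd0
    have h4 : (1-α) ^ ℓ ≤ R u w * (R ^ ℓ₀) w u := by
      rw [hℓdef, pow_succ']
      apply mul_le_mul (le_of_eq (Ralpha_edge E hsimple huw).symm) hℓ₀
        (pow_nonneg h1α.le ℓ₀) (hRnn _ _)
    calc s ≤ R u u * (R ^ ℓ₀) u u + R u w * (R ^ ℓ₀) w u := by rw [hs]; linarith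
      _ ≤ (R * R ^ ℓ₀) u u := h2
      _ = (R ^ ℓ) u u := by rw [hℓdef, pow_succ']
  -- powers of the key bound
  have hpowt : ∀ t : ℕ, s ^ t ≤ (R ^ (ℓ * t)) u u := by
    intro t
    induction t with
    | zero => simp
    | succ n ih =>
      have hmul : ℓ * (n + 1) = ℓ * n + ℓ := by ring
      rw [hmul, pow_add R (ℓ * n) ℓ]
      calc s ^ (n + 1) = s ^ n * s := pow_succ s n
        _ ≤ (R ^ (ℓ * n)) u u * (R ^ ℓ) u u :=
            mul_le_mul ih hkey hs_pos.le (hPnn _ u u)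
        _ ≤ (R ^ (ℓ * n) * R ^ ℓ) u u := mul_entry_le (hPnn _) (hPnn _) _ _ _
  -- entry vs norm of complex powers
  have hApow : ∀ n : ℕ, (Aalpha α E) ^ n = (algebraMap ℝ ℂ).mapMatrix (R ^ n) :=
    fun n => Aalpha_pow α E n
  have hnorm : ∀ n : ℕ, ENNReal.ofReal ((R ^ n) u u) ≤ (‖(Aalpha α E) ^ n‖₊ : ℝ≥0∞) := by
    intro n
    have h1 : ((Aalpha α E) ^ n) u u = (((R ^ n) u u : ℝ) : ℂ) := by
      rw [hApow n]; rfl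
    have h2 : ‖((Aalpha α E) ^ n) u u‖₊ ≤ ‖(Aalpha α E) ^ n‖₊ := by
      rw [Matrix.linfty_opNNNorm_def]
      refine le_trans ?_ (Finset.le_sup (Finset.mem_univ u))
      exact Finset.single_le_sum (f := fun j => ‖((Aalpha α E) ^ n) u j‖₊)
        (fun j _ => zero_le) (Finset.mem_univ u)
    have h3 : (‖((Aalpha α E) ^ n) u u‖₊ : ℝ≥0∞) = ENNReal.ofReal ((R ^ n) u u) := by
      rw [h1, ← Real.enorm_eq_ofReal (hPnn n u u)]
      simp [Complex.nnnorm_real, enorm_eq_nnnorm]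
    rw [← h3]
    exact_mod_cast h2
  -- frequently bound on the Gelfand sequence
  set c : ℝ≥0∞ := ENNReal.ofReal s ^ (1 / (ℓ:ℝ)) with hc
  have hfreq : ∃ᶠ n : ℕ in Filter.atTop, c ≤ (‖(Aalpha α E) ^ n‖₊ : ℝ≥0∞) ^ (1 / (n:ℝ)) := by
    rw [Filter.frequently_atTop]
    intro N
    refine ⟨ℓ * (N + 1), le_trans (Nat.le_succ N) (Nat.le_mul_of_pos_left (N + 1) (by omega)), ?_⟩
    have ht1 : (1:ℕ) ≤ N + 1 := by omega
    set t := N + 1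
    have hn0 : (0:ℝ) < ((ℓ * t : ℕ) : ℝ) := by
      have : 0 < ℓ * t := by positivity
      exact_mod_cast this
    have step1 : ENNReal.ofReal (s ^ t) ≤ (‖(Aalpha α E) ^ (ℓ * t)‖₊ : ℝ≥0∞) :=
      le_trans (ENNReal.ofReal_le_ofReal (hpowt t)) (hnorm (ℓ * t))
    have step2 : (ENNReal.ofReal (s ^ t)) ^ (1 / ((ℓ * t : ℕ):ℝ)) ≤
        (‖(Aalpha α E) ^ (ℓ * t)‖₊ : ℝ≥0∞) ^ (1 / ((ℓ * t : ℕ):ℝ)) :=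
      ENNReal.rpow_le_rpow step1 (by positivity)
    have step3 : (ENNReal.ofReal (s ^ t)) ^ (1 / ((ℓ * t : ℕ):ℝ)) = c := by
      rw [ENNReal.ofReal_pow hs_pos.le, ← ENNReal.rpow_natCast (ENNReal.ofReal s) t,
        ← ENNReal.rpow_mul, hc]
      congr 1
      have hℓ0 : (ℓ:ℝ) ≠ 0 := ne_of_gt hℓpos
      have ht0 : (t:ℝ) ≠ 0 := by positivity
      rw [Nat.cast_mul]
      field_simp
    rw [← step3]
    exact step2
  have hlimsup : c ≤ lambdaAlpha α E := by
    refine le_trans ?_ (spectrum.limsup_pow_nnnorm_pow_one_div_le_spectralRadius (Aalpha α E))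
    apply Filter.le_limsup_of_frequently_le hfreq
  -- strict inequality ofReal d < c
  refine lt_of_lt_of_le ?_ hlimsup
  have hdc : ENNReal.ofReal d = (ENNReal.ofReal (d ^ ℓ)) ^ (1 / (ℓ:ℝ)) := by
    rw [ENNReal.ofReal_pow hd0, ← ENNReal.rpow_natCast (ENNReal.ofReal d) ℓ,
      ← ENNReal.rpow_mul]
    rw [mul_one_div, div_self (ne_of_gt hℓpos), ENNReal.rpow_one]
  have hlt : ENNReal.ofReal (d ^ ℓ) < ENNReal.ofReal s := by
    rw [ENNReal.ofReal_lt_ofReal_iff hs_pos]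
    have : (0:ℝ) < (1-α)^ℓ := pow_pos h1α ℓ
    rw [hs]; linarith
  calc ENNReal.ofReal d = (ENNReal.ofReal (d ^ ℓ)) ^ (1 / (ℓ:ℝ)) := hdc
    _ < (ENNReal.ofReal s) ^ (1 / (ℓ:ℝ)) := ENNReal.rpow_lt_rpow hlt (by positivity)
    _ = c := hc.symm
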